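/- arXiv:2407.05105 — 6 statements merged into one kernel-verified Lean document; each statement's English description precedes it below -/
import Mathlib

section
/- Let q₁, q₂ : ℝ → ℝ be measurable and square-integrable on (0,1), let c₁, c₂ ∈ ℝ and r₁, r₂ ≥ 0. Set m_j = ∫₀¹ q_j(t) dt, and assume s_j² := ∫₀¹ q_j(t)² dt − m_j² > 0 for j = 1,2. Define μ_j = c_j + (r_j/2)m_j, σ_j = (r_j/2)·√(s_j²), and ρ₁₂ = (∫₀¹ q₁(t)q₂(t) dt − m₁m₂)/√(s₁²·s₂²). Then ∫₀¹ ((c₁ + (r₁/2)q₁(t)) − (c₂ + (r₂/2)q₂(t)))² dt = (μ₁ − μ₂)² + (σ₁ − σ₂)² + 2σ₁σ₂(1 − ρ₁₂). -/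
open MeasureTheory

/-- The squared Mallows distance expressed through the means, standard deviations
and the correlation between the two quantile functions:
`d_M² = (μ₁ − μ₂)² + (σ₁ − σ₂)² + 2σ₁σ₂(1 − ρ₁₂)`. -/
theorem mallows_sq_mu_sigma_rho (q₁ q₂ : ℝ → ℝ) (c₁ c₂ r₁ r₂ : ℝ)
    (hr₁ : 0 ≤ r₁) (hr₂ : 0 ≤ r₂)
    (hmeas₁ : Measurable q₁) (hmeas₂ : Measurable q₂)
    (hq₁ : MemLp q₁ 2 (volume.restrict (Set.Ioo (0:ℝ) 1)))
    (hq₂ : MemLp q₂ 2 (volume.restrict (Set.Ioo (0:ℝ) 1)))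
    (m₁ m₂ s₁sq s₂sq μ₁ μ₂ σ₁ σ₂ ρ₁₂ : ℝ)
    (hm₁ : m₁ = ∫ t in Set.Ioo (0:ℝ) 1, q₁ t)
    (hm₂ : m₂ = ∫ t in Set.Ioo (0:ℝ) 1, q₂ t)
    (hs₁ : s₁sq = (∫ t in Set.Ioo (0:ℝ) 1, (q₁ t) ^ 2) - m₁ ^ 2)
    (hs₂ : s₂sq = (∫ t in Set.Ioo (0:ℝ) 1, (q₂ t) ^ 2) - m₂ ^ 2)
    (hs₁pos : 0 < s₁sq) (hs₂pos : 0 < s₂sq)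
    (hμ₁ : μ₁ = c₁ + r₁ / 2 * m₁) (hμ₂ : μ₂ = c₂ + r₂ / 2 * m₂)
    (hσ₁ : σ₁ = r₁ / 2 * Real.sqrt s₁sq) (hσ₂ : σ₂ = r₂ / 2 * Real.sqrt s₂sq)
    (hρ : ρ₁₂ = ((∫ t in Set.Ioo (0:ℝ) 1, q₁ t * q₂ t) - m₁ * m₂)
            / Real.sqrt (s₁sq * s₂sq)) :
    (∫ t in Set.Ioo (0:ℝ) 1, ((c₁ + r₁ / 2 * q₁ t) - (c₂ + r₂ / 2 * q₂ t)) ^ 2)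
      = (μ₁ - μ₂) ^ 2 + (σ₁ - σ₂) ^ 2 + 2 * σ₁ * σ₂ * (1 - ρ₁₂) := by
  set μ := volume.restrict (Set.Ioo (0:ℝ) 1) with hμdef
  have hfin : IsFiniteMeasure μ := by
    constructor
    simp [hμdef, Real.volume_Ioo]
  have hi1 : Integrable q₁ μ := hq₁.integrable (by norm_num)
  have hi2 : Integrable q₂ μ := hq₂.integrable (by norm_num)
  have hsq1 : Integrable (fun t => q₁ t ^ 2) μ := hq₁.integrable_sq
  have hsq2 : Integrable (fun t => q₂ t ^ 2) μ := hq₂.integrable_sq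
  have hsqs : Integrable (fun t => (q₁ t + q₂ t) ^ 2) μ := (hq₁.add hq₂).integrable_sq
  have hmul : Integrable (fun t => q₁ t * q₂ t) μ := by
    have : (fun t => q₁ t * q₂ t)
        = fun t => ((q₁ t + q₂ t) ^ 2 - q₁ t ^ 2 - q₂ t ^ 2) / 2 := by
      funext t; ring
    rw [this]
    exact ((hsqs.sub hsq1).sub hsq2).div_const 2
  have hvol : (μ Set.univ).toReal = 1 := by
    simp [hμdef, Real.volume_Ioo]
  -- expand the integrand
  have hexp : (∫ t, ((c₁ + r₁ / 2 * q₁ t) - (c₂ + r₂ / 2 * q₂ t)) ^ 2 ∂μ)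
      = (c₁ - c₂) ^ 2 + (2 * (c₁ - c₂) * (r₁ / 2)) * m₁
        + (-(2 * (c₁ - c₂) * (r₂ / 2))) * m₂
        + (r₁ / 2) ^ 2 * (∫ t, q₁ t ^ 2 ∂μ)
        + (r₂ / 2) ^ 2 * (∫ t, q₂ t ^ 2 ∂μ)
        + (-(2 * (r₁ / 2) * (r₂ / 2))) * (∫ t, q₁ t * q₂ t ∂μ) := by
    have : (fun t => ((c₁ + r₁ / 2 * q₁ t) - (c₂ + r₂ / 2 * q₂ t)) ^ 2)
        = fun t => (c₁ - c₂) ^ 2 + (2 * (c₁ - c₂) * (r₁ / 2)) * q₁ t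
          + (-(2 * (c₁ - c₂) * (r₂ / 2))) * q₂ t
          + (r₁ / 2) ^ 2 * q₁ t ^ 2
          + (r₂ / 2) ^ 2 * q₂ t ^ 2
          + (-(2 * (r₁ / 2) * (r₂ / 2))) * (q₁ t * q₂ t) := by
      funext t; ring
    rw [this]
    have h1 : Integrable (fun t => (c₁ - c₂) ^ 2 + (2 * (c₁ - c₂) * (r₁ / 2)) * q₁ t) μ :=
      (integrable_const _).add (hi1.const_mul _)
    have h2 : Integrable (fun t => (c₁ - c₂) ^ 2 + (2 * (c₁ - c₂) * (r₁ / 2)) * q₁ t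
        + (-(2 * (c₁ - c₂) * (r₂ / 2))) * q₂ t) μ := h1.add (hi2.const_mul _)
    have h3 : Integrable (fun t => (c₁ - c₂) ^ 2 + (2 * (c₁ - c₂) * (r₁ / 2)) * q₁ t
        + (-(2 * (c₁ - c₂) * (r₂ / 2))) * q₂ t + (r₁ / 2) ^ 2 * q₁ t ^ 2) μ :=
      h2.add (hsq1.const_mul _)
    have h4 : Integrable (fun t => (c₁ - c₂) ^ 2 + (2 * (c₁ - c₂) * (r₁ / 2)) * q₁ t
        + (-(2 * (c₁ - c₂) * (r₂ / 2))) * q₂ t + (r₁ / 2) ^ 2 * q₁ t ^ 2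
        + (r₂ / 2) ^ 2 * q₂ t ^ 2) μ := h3.add (hsq2.const_mul _)
    rw [integral_add h4 (hmul.const_mul _),
        integral_add h3 (hsq2.const_mul _),
        integral_add h2 (hsq1.const_mul _),
        integral_add h1 (hi2.const_mul _),
        integral_add (integrable_const _) (hi1.const_mul _),
        integral_const, integral_const_mul, integral_const_mul, integral_const_mul,
        integral_const_mul, integral_const_mul]
    rw [measureReal_def, hvol, hm₁, hm₂]
    simp only [smul_eq_mul, one_mul]
  have hσ₁sq : σ₁ ^ 2 = (r₁ / 2) ^ 2 * s₁sq := by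
    rw [hσ₁, mul_pow, Real.sq_sqrt hs₁pos.le]
  have hσ₂sq : σ₂ ^ 2 = (r₂ / 2) ^ 2 * s₂sq := by
    rw [hσ₂, mul_pow, Real.sq_sqrt hs₂pos.le]
  have hcross : σ₁ * σ₂ * ρ₁₂
      = (r₁ / 2) * (r₂ / 2) * ((∫ t, q₁ t * q₂ t ∂μ) - m₁ * m₂) := by
    rw [hσ₁, hσ₂, hρ, Real.sqrt_mul hs₁pos.le]
    have h1 : Real.sqrt s₁sq ≠ 0 := by positivity
    have h2 : Real.sqrt s₂sq ≠ 0 := by positivity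
    field_simp
  rw [show (∫ t in Set.Ioo (0:ℝ) 1, ((c₁ + r₁ / 2 * q₁ t) - (c₂ + r₂ / 2 * q₂ t)) ^ 2)
      = (∫ t, ((c₁ + r₁ / 2 * q₁ t) - (c₂ + r₂ / 2 * q₂ t)) ^ 2 ∂μ) from rfl, hexp]
  have : (μ₁ - μ₂) ^ 2 + (σ₁ - σ₂) ^ 2 + 2 * σ₁ * σ₂ * (1 - ρ₁₂)
      = (μ₁ - μ₂) ^ 2 + σ₁ ^ 2 + σ₂ ^ 2 - 2 * (σ₁ * σ₂ * ρ₁₂) := by ring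
  rw [this, hσ₁sq, hσ₂sq, hcross, hμ₁, hμ₂, hs₁, hs₂]
  ring
end

section
/- Let p ∈ ℕ, let c₁, c₂, r₁, r₂ : Fin p → ℝ, and for each i let q_i : ℝ → ℝ be measurable and square-integrable on (0,1). Set ψ(i) = ∫₀¹ q_i(t) dt and δ(i) = (∫₀¹ q_i(t)² dt)/4, let H be the (2p)×(2p) block matrix H = fromBlocks(I_p, (1/2)·diagonal(ψ), (1/2)·diagonal(ψ), diagonal(δ)), and let y₁ = (c₁, r₁) and y₂ = (c₂, r₂) be the concatenated vectors in ℝ^{2p} (indexed by Fin p ⊕ Fin p). Then ∑_{i} ∫₀¹ ((c₁(i) + (r₁(i)/2)q_i(t)) − (c₂(i) + (r₂(i)/2)q_i(t)))² dt = (y₁ − y₂)ᵀ H (y₁ − y₂). -/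
open MeasureTheory Matrix

/-- The multivariate squared Mallows distance equals a Mahalanobis-type quadratic form
`(y₁ − y₂)ᵀ H (y₁ − y₂)` on the joint vector of centres and ranges, with
`H = fromBlocks(I, Ψ/2, Ψ/2, Δ)` built from the first two moments of the latent
quantile functions. -/
theorem mallows_sq_as_mahalanobis (p : ℕ) (c₁ c₂ r₁ r₂ : Fin p → ℝ)
    (q : Fin p → ℝ → ℝ)
    (hmeas : ∀ i, Measurable (q i))
    (hq : ∀ i, MemLp (q i) 2 (volume.restrict (Set.Ioo (0:ℝ) 1)))
    (ψ δ : Fin p → ℝ)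
    (hψ : ∀ i, ψ i = ∫ t in Set.Ioo (0:ℝ) 1, q i t)
    (hδ : ∀ i, δ i = (∫ t in Set.Ioo (0:ℝ) 1, (q i t) ^ 2) / 4)
    (H : Matrix (Fin p ⊕ Fin p) (Fin p ⊕ Fin p) ℝ)
    (hH : H = Matrix.fromBlocks 1 ((1 / 2 : ℝ) • Matrix.diagonal ψ)
        ((1 / 2 : ℝ) • Matrix.diagonal ψ) (Matrix.diagonal δ))
    (y₁ y₂ : Fin p ⊕ Fin p → ℝ)
    (hy₁ : y₁ = Sum.elim c₁ r₁) (hy₂ : y₂ = Sum.elim c₂ r₂) :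
    (∑ i, ∫ t in Set.Ioo (0:ℝ) 1,
        ((c₁ i + r₁ i / 2 * q i t) - (c₂ i + r₂ i / 2 * q i t)) ^ 2)
      = (y₁ - y₂) ⬝ᵥ H.mulVec (y₁ - y₂) := by
  subst hy₁ hy₂ hH
  haveI : IsFiniteMeasure (volume.restrict (Set.Ioo (0:ℝ) 1)) := by
    constructor
    simp [Real.volume_Ioo]
  have key : ∀ i, (∫ t in Set.Ioo (0:ℝ) 1,
      ((c₁ i + r₁ i / 2 * q i t) - (c₂ i + r₂ i / 2 * q i t)) ^ 2)
      = (c₁ i - c₂ i)^2 + ((c₁ i - c₂ i) * (r₁ i - r₂ i)) * ψ i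
        + (r₁ i - r₂ i)^2 * δ i := by
    intro i
    have hint1 : Integrable (q i) (volume.restrict (Set.Ioo (0:ℝ) 1)) :=
      (hq i).integrable one_le_two
    have hint2 : Integrable (fun t => q i t ^ 2) (volume.restrict (Set.Ioo (0:ℝ) 1)) := by
      have := (hq i).integrable_sq
      simpa [Pi.pow_apply] using this
    have hexp : ∀ t, ((c₁ i + r₁ i / 2 * q i t) - (c₂ i + r₂ i / 2 * q i t)) ^ 2
        = (c₁ i - c₂ i)^2 + ((c₁ i - c₂ i) * (r₁ i - r₂ i)) * q i t
          + ((r₁ i - r₂ i)^2 / 4) * (q i t ^ 2) := by intro t; ring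
    simp_rw [hexp]
    rw [integral_add (by exact (integrable_const _).add (hint1.const_mul _))
        (hint2.const_mul _),
      integral_add (integrable_const _) (hint1.const_mul _),
      integral_const, integral_const_mul, integral_const_mul]
    simp [Real.volume_Ioo, hψ, hδ]
    ring
  rw [Finset.sum_congr rfl (fun i _ => key i)]
  simp [Matrix.mulVec, dotProduct, Fintype.sum_sum_type, Matrix.fromBlocks,
    Matrix.one_apply, Matrix.diagonal_apply, Sum.elim_inl, Sum.elim_inr,
    Finset.mul_sum, Finset.sum_ite_eq, Finset.sum_ite_eq']
  rw [← Finset.sum_add_distrib]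
  apply Finset.sum_congr rfl
  intro i _
  ring
end

section
/- Let (Ω, 𝔽, P) be a probability space, p ∈ ℕ, and let C, R : Ω → (Fin p → ℝ) be random vectors each of whose components is square-integrable. Let δ, ψ : Fin p → ℝ satisfy ψ(i)² ≤ 4·δ(i) for every i. Define f : (Fin p → ℝ) × (Fin p → ℝ) → ℝ by f(c, r) = E[ ∑_i ( (C_i − c(i))² + δ(i)(R_i − r(i))² + ψ(i)(C_i − c(i))(R_i − r(i)) ) ]. Then for all c, r, f(E[C], E[R]) ≤ f(c, r); that is, the vector of componentwise means (μ_C, μ_R) is a global minimiser of f. -/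
open MeasureTheory

private lemma integrable_mul_of_memL2 {Ω : Type*} [MeasurableSpace Ω]
    {P : Measure Ω} {g h : Ω → ℝ} (hg : MemLp g 2 P) (hh : MemLp h 2 P) :
    Integrable (fun ω => g ω * h ω) P := by
  have h1 : Integrable (fun ω => ((g ω + h ω) ^ 2 - g ω ^ 2 - h ω ^ 2) / 2) P :=
    (((hg.add hh).integrable_sq.sub hg.integrable_sq).sub hh.integrable_sq).div_const 2
  exact h1.congr (by filter_upwards with ω; ring)

private lemma key_one_dim {Ω : Type*} [MeasurableSpace Ω]
    (P : Measure Ω) [IsProbabilityMeasure P]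
    (g h : Ω → ℝ) (hg : MemLp g 2 P) (hh : MemLp h 2 P)
    (δ ψ : ℝ) (hδψ : ψ ^ 2 ≤ 4 * δ) (c r : ℝ) :
    ∫ ω, ((g ω - ∫ ω, g ω ∂P) ^ 2 + δ * (h ω - ∫ ω, h ω ∂P) ^ 2
        + ψ * (g ω - ∫ ω, g ω ∂P) * (h ω - ∫ ω, h ω ∂P)) ∂P
    ≤ ∫ ω, ((g ω - c) ^ 2 + δ * (h ω - r) ^ 2 + ψ * (g ω - c) * (h ω - r)) ∂P := by
  set μg : ℝ := ∫ ω, g ω ∂P with hμg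
  set μh : ℝ := ∫ ω, h ω ∂P with hμh
  set a : ℝ := μg - c
  set b : ℝ := μh - r
  have hQ : 0 ≤ a ^ 2 + δ * b ^ 2 + ψ * a * b := by
    nlinarith [sq_nonneg (2 * a + ψ * b), sq_nonneg b]
  -- integrability facts
  have hgμ : MemLp (fun ω => g ω - μg) 2 P := hg.sub (memLp_const μg)
  have hhμ : MemLp (fun ω => h ω - μh) 2 P := hh.sub (memLp_const μh)
  have hgi : Integrable g P := hg.integrable one_le_two
  have hhi : Integrable h P := hh.integrable one_le_two
  have hI1 : Integrable (fun ω => (g ω - μg) ^ 2 + δ * (h ω - μh) ^ 2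
      + ψ * (g ω - μg) * (h ω - μh)) P := by
    refine (hgμ.integrable_sq.add (hhμ.integrable_sq.const_mul δ)).add ?_
    exact ((integrable_mul_of_memL2 hgμ hhμ).const_mul ψ).congr
      (by filter_upwards with ω; ring)
  have i1 : Integrable (fun ω => (2 * a + ψ * b) * (g ω - μg)) P := by
    exact (hgi.sub (integrable_const μg)).const_mul _
  have i2 : Integrable (fun ω => (2 * δ * b + ψ * a) * (h ω - μh)) P := by
    exact (hhi.sub (integrable_const μh)).const_mul _
  have iQ : Integrable (fun _ : Ω => a ^ 2 + δ * b ^ 2 + ψ * a * b) P := integrable_const _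
  have i3 : Integrable (fun ω => (2 * δ * b + ψ * a) * (h ω - μh)
      + (a ^ 2 + δ * b ^ 2 + ψ * a * b)) P := by exact i2.add iQ
  have hI2 : Integrable (fun ω => (2 * a + ψ * b) * (g ω - μg)
      + ((2 * δ * b + ψ * a) * (h ω - μh) + (a ^ 2 + δ * b ^ 2 + ψ * a * b))) P := by
    exact i1.add i3
  have hzg : ∫ ω, (g ω - μg) ∂P = 0 := by
    rw [integral_sub hgi (integrable_const μg), integral_const]
    simp [hμg]
  have hzh : ∫ ω, (h ω - μh) ∂P = 0 := by
    rw [integral_sub hhi (integrable_const μh), integral_const]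
    simp [hμh]
  have key : ∫ ω, ((g ω - c) ^ 2 + δ * (h ω - r) ^ 2 + ψ * (g ω - c) * (h ω - r)) ∂P
      = (∫ ω, ((g ω - μg) ^ 2 + δ * (h ω - μh) ^ 2
          + ψ * (g ω - μg) * (h ω - μh)) ∂P)
        + (a ^ 2 + δ * b ^ 2 + ψ * a * b) := by
    have hfun : (fun ω => (g ω - c) ^ 2 + δ * (h ω - r) ^ 2 + ψ * (g ω - c) * (h ω - r))
        = fun ω => ((g ω - μg) ^ 2 + δ * (h ω - μh) ^ 2 + ψ * (g ω - μg) * (h ω - μh))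
          + ((2 * a + ψ * b) * (g ω - μg)
            + ((2 * δ * b + ψ * a) * (h ω - μh) + (a ^ 2 + δ * b ^ 2 + ψ * a * b))) := by
      funext ω
      simp only [a, b]
      ring
    rw [hfun, integral_add hI1 hI2, integral_add i1 i3, integral_add i2 iQ,
      integral_const_mul, integral_const_mul, hzg, hzh, integral_const]
    simp
  rw [key]
  linarith

/-- The population barycentre: the vector of componentwise means `(E[C], E[R])`
globally minimises the expected squared Mallows distance
`f(c,r) = E[∑ᵢ (Cᵢ − cᵢ)² + δᵢ(Rᵢ − rᵢ)² + ψᵢ(Cᵢ − cᵢ)(Rᵢ − rᵢ)]`,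
provided `ψᵢ² ≤ 4δᵢ` for all `i`. -/
theorem population_barycentre_minimises {Ω : Type*} [MeasurableSpace Ω]
    (P : Measure Ω) [IsProbabilityMeasure P] (p : ℕ)
    (C R : Ω → Fin p → ℝ)
    (hC : ∀ i, MemLp (fun ω => C ω i) 2 P)
    (hR : ∀ i, MemLp (fun ω => R ω i) 2 P)
    (δ ψ : Fin p → ℝ) (hδψ : ∀ i, ψ i ^ 2 ≤ 4 * δ i)
    (f : (Fin p → ℝ) → (Fin p → ℝ) → ℝ)
    (hf : ∀ c r, f c r = ∫ ω, ∑ i,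
        ((C ω i - c i) ^ 2 + δ i * (R ω i - r i) ^ 2
          + ψ i * (C ω i - c i) * (R ω i - r i)) ∂P) :
    ∀ c r, f (fun i => ∫ ω, C ω i ∂P) (fun i => ∫ ω, R ω i ∂P) ≤ f c r := by
  intro c r
  rw [hf, hf]
  have hterm : ∀ (c r : Fin p → ℝ) (i : Fin p), Integrable (fun ω =>
      (C ω i - c i) ^ 2 + δ i * (R ω i - r i) ^ 2
        + ψ i * (C ω i - c i) * (R ω i - r i)) P := by
    intro c r i
    have hCc : MemLp (fun ω => C ω i - c i) 2 P := (hC i).sub (memLp_const _)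
    have hRr : MemLp (fun ω => R ω i - r i) 2 P := (hR i).sub (memLp_const _)
    refine (hCc.integrable_sq.add (hRr.integrable_sq.const_mul _)).add ?_
    exact ((integrable_mul_of_memL2 hCc hRr).const_mul (ψ i)).congr
      (by filter_upwards with ω; ring)
  have hsplit : ∀ c r : Fin p → ℝ, (∫ ω, ∑ i,
      ((C ω i - c i) ^ 2 + δ i * (R ω i - r i) ^ 2
        + ψ i * (C ω i - c i) * (R ω i - r i)) ∂P) = ∑ i, ∫ ω,
      ((C ω i - c i) ^ 2 + δ i * (R ω i - r i) ^ 2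
        + ψ i * (C ω i - c i) * (R ω i - r i)) ∂P :=
    fun c r => integral_finset_sum _ (fun i _ => hterm c r i)
  rw [hsplit, hsplit]
  refine Finset.sum_le_sum fun i _ => ?_
  exact key_one_dim P (fun ω => C ω i) (fun ω => R ω i) (hC i) (hR i)
    (δ i) (ψ i) (hδψ i) (c i) (r i)
end

section
/- Let p, n ∈ ℕ with n ≥ 1, let c, r : Fin n → (Fin p → ℝ) be finite data, and let δ, ψ : Fin p → ℝ satisfy ψ(i)² ≤ 4·δ(i) for all i. Define g(c₀, r₀) = (1/n) ∑_{j} ∑_{i} ( (c_j(i) − c₀(i))² + δ(i)(r_j(i) − r₀(i))² + ψ(i)(c_j(i) − c₀(i))(r_j(i) − r₀(i)) ). Then g attains its global minimum at the componentwise sample means, i.e., for all c₀, r₀, g(c̄, r̄) ≤ g(c₀, r₀), where c̄(i) = (1/n)∑_j c_j(i) and r̄(i) = (1/n)∑_j r_j(i). -/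
open Finset

lemma expand_sum (n : ℕ) (a b : Fin n → ℝ) (d q u v : ℝ) :
    ∑ j, ((a j - u) ^ 2 + d * (b j - v) ^ 2 + q * (a j - u) * (b j - v))
    = (∑ j, ((a j) ^ 2 + d * (b j) ^ 2 + q * (a j * b j)))
      - (2 * u + q * v) * (∑ j, a j) - (2 * d * v + q * u) * (∑ j, b j)
      + (n : ℝ) * (u ^ 2 + d * v ^ 2 + q * u * v) := by
  have h : ∀ j : Fin n,
      (a j - u) ^ 2 + d * (b j - v) ^ 2 + q * (a j - u) * (b j - v)
      = ((a j) ^ 2 + d * (b j) ^ 2 + q * (a j * b j))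
        - (2 * u + q * v) * a j - (2 * d * v + q * u) * b j
        + (u ^ 2 + d * v ^ 2 + q * u * v) := by
    intro j; ring
  rw [Finset.sum_congr rfl fun j _ => h j]
  simp [Finset.sum_add_distrib, Finset.sum_sub_distrib, ← Finset.mul_sum,
    Finset.sum_const, Finset.card_univ, nsmul_eq_mul]
  ring

lemma key (n : ℕ) (hn : 1 ≤ n) (a b : Fin n → ℝ) (d q : ℝ) (h : q ^ 2 ≤ 4 * d)
    (x y : ℝ) :
    ∑ j, ((a j - (1 / n : ℝ) * ∑ k, a k) ^ 2
        + d * (b j - (1 / n : ℝ) * ∑ k, b k) ^ 2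
        + q * (a j - (1 / n : ℝ) * ∑ k, a k) * (b j - (1 / n : ℝ) * ∑ k, b k))
    ≤ ∑ j, ((a j - x) ^ 2 + d * (b j - y) ^ 2 + q * (a j - x) * (b j - y)) := by
  have hn0 : (n : ℝ) ≠ 0 := by positivity
  set ma : ℝ := (1 / n : ℝ) * ∑ k, a k with hma
  set mb : ℝ := (1 / n : ℝ) * ∑ k, b k with hmb
  have hA : (∑ k, a k) = (n : ℝ) * ma := by rw [hma, ← mul_assoc, mul_one_div_cancel hn0, one_mul]
  have hB : (∑ k, b k) = (n : ℝ) * mb := by rw [hmb, ← mul_assoc, mul_one_div_cancel hn0, one_mul]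
  rw [expand_sum, expand_sum, hA, hB]
  have hQ : 0 ≤ (x - ma) ^ 2 + d * (y - mb) ^ 2 + q * (x - ma) * (y - mb) := by
    nlinarith [sq_nonneg (2 * (x - ma) + q * (y - mb)), sq_nonneg (y - mb)]
  have hnQ : 0 ≤ (n : ℝ) * ((x - ma) ^ 2 + d * (y - mb) ^ 2 + q * (x - ma) * (y - mb)) :=
    mul_nonneg (by positivity) hQ
  nlinarith [hnQ]

/-- The sample barycentre: the componentwise sample means `(c̄, r̄)` globally minimise
the average of the squared Mallows distances to the sample, provided `ψᵢ² ≤ 4δᵢ`. -/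
theorem sample_barycentre_minimises (p n : ℕ) (hn : 1 ≤ n)
    (c r : Fin n → Fin p → ℝ)
    (δ ψ : Fin p → ℝ) (hδψ : ∀ i, ψ i ^ 2 ≤ 4 * δ i)
    (g : (Fin p → ℝ) → (Fin p → ℝ) → ℝ)
    (hg : ∀ c₀ r₀, g c₀ r₀ = (1 / n : ℝ) * ∑ j, ∑ i,
        ((c j i - c₀ i) ^ 2 + δ i * (r j i - r₀ i) ^ 2
          + ψ i * (c j i - c₀ i) * (r j i - r₀ i))) :
    ∀ c₀ r₀, g (fun i => (1 / n : ℝ) * ∑ j, c j i) (fun i => (1 / n : ℝ) * ∑ j, r j i)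
      ≤ g c₀ r₀ := by
  intro c₀ r₀
  rw [hg, hg]
  apply mul_le_mul_of_nonneg_left _ (by positivity)
  have h1 : ∀ (c₀ r₀ : Fin p → ℝ), (∑ j, ∑ i,
        ((c j i - c₀ i) ^ 2 + δ i * (r j i - r₀ i) ^ 2
          + ψ i * (c j i - c₀ i) * (r j i - r₀ i)))
      = ∑ i, ∑ j, ((c j i - c₀ i) ^ 2 + δ i * (r j i - r₀ i) ^ 2
          + ψ i * (c j i - c₀ i) * (r j i - r₀ i)) := fun _ _ => Finset.sum_comm
  rw [h1, h1]
  apply Finset.sum_le_sum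
  intro i _
  exact key n hn (fun j => c j i) (fun j => r j i) (δ i) (ψ i) (hδψ i) (c₀ i) (r₀ i)
end

section
/- Let (Ω, 𝔽, P) be a probability space, let C₁, C₂, R₁, R₂ : Ω → ℝ be square-integrable random variables, and let q₁, q₂ : ℝ → ℝ be measurable and square-integrable on (0,1). Write μ_{C_i} = E[C_i] and μ_{R_i} = E[R_i]. Then E[ ∫₀¹ ( (C₁ − μ_{C₁}) + ((R₁ − μ_{R₁})/2)·q₁(t) )·( (C₂ − μ_{C₂}) + ((R₂ − μ_{R₂})/2)·q₂(t) ) dt ] = Cov(C₁, C₂) + ((∫₀¹ q₁(t)q₂(t) dt)/4)·Cov(R₁, R₂) + ((∫₀¹ q₂(t) dt)/2)·Cov(C₁, R₂) + ((∫₀¹ q₁(t) dt)/2)·Cov(C₂, R₁), where Cov(Y, Z) = E[(Y − E Y)(Z − E Z)]. -/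
open MeasureTheory

/-- Covariance of two real random variables. -/
noncomputable def cov {Ω : Type*} [MeasurableSpace Ω] (P : MeasureTheory.Measure Ω)
    (X Y : Ω → ℝ) : ℝ :=
  ∫ ω, (X ω - ∫ ω', X ω' ∂P) * (Y ω - ∫ ω', Y ω' ∂P) ∂P


private lemma l2_mul_integrable {α : Type*} [MeasurableSpace α] {μ : Measure α}
    {f g : α → ℝ} (hf : MemLp f 2 μ) (hg : MemLp g 2 μ) :
    Integrable (f * g) μ := by
  have h : MemLp (f • g) 1 μ :=
    hg.smul hf
  rw [smul_eq_mul] at h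
  exact memLp_one_iff_integrable.mp h

/-- The barycentre-based covariance between two interval-valued random variables:
`Cov_B(X₁,X₂) = Cov(C₁,C₂) + (𝔈(U₁,U₂)/4)Cov(R₁,R₂) + (E(U₂)/2)Cov(C₁,R₂)
  + (E(U₁)/2)Cov(C₂,R₁)`. -/
theorem covB_eq (Ω : Type*) [MeasurableSpace Ω]
    (P : Measure Ω) [IsProbabilityMeasure P]
    (C₁ C₂ R₁ R₂ : Ω → ℝ)
    (hC₁ : MemLp C₁ 2 P) (hC₂ : MemLp C₂ 2 P)
    (hR₁ : MemLp R₁ 2 P) (hR₂ : MemLp R₂ 2 P)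
    (q₁ q₂ : ℝ → ℝ)
    (hmeas₁ : Measurable q₁) (hmeas₂ : Measurable q₂)
    (hq₁ : MemLp q₁ 2 (volume.restrict (Set.Ioo (0:ℝ) 1)))
    (hq₂ : MemLp q₂ 2 (volume.restrict (Set.Ioo (0:ℝ) 1))) :
    (∫ ω, (∫ t in Set.Ioo (0:ℝ) 1,
        ((C₁ ω - ∫ ω', C₁ ω' ∂P) + (R₁ ω - ∫ ω', R₁ ω' ∂P) / 2 * q₁ t)
          * ((C₂ ω - ∫ ω', C₂ ω' ∂P) + (R₂ ω - ∫ ω', R₂ ω' ∂P) / 2 * q₂ t)) ∂P)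
      = cov P C₁ C₂
        + (∫ t in Set.Ioo (0:ℝ) 1, q₁ t * q₂ t) / 4 * cov P R₁ R₂
        + (∫ t in Set.Ioo (0:ℝ) 1, q₂ t) / 2 * cov P C₁ R₂
        + (∫ t in Set.Ioo (0:ℝ) 1, q₁ t) / 2 * cov P C₂ R₁ := by
  set S := Set.Ioo (0:ℝ) 1 with hSdef
  set ν := volume.restrict S with hν
  have hq₁i : Integrable q₁ ν := hq₁.integrable one_le_two
  have hq₂i : Integrable q₂ ν := hq₂.integrable one_le_two
  have hq12 : Integrable (q₁ * q₂) ν := l2_mul_integrable hq₁ hq₂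
  set I1 := ∫ t in S, q₁ t with hI1
  set I2 := ∫ t in S, q₂ t with hI2
  set I12 := ∫ t in S, q₁ t * q₂ t with hI12
  set μC₁ := ∫ ω', C₁ ω' ∂P
  set μC₂ := ∫ ω', C₂ ω' ∂P
  set μR₁ := ∫ ω', R₁ ω' ∂P
  set μR₂ := ∫ ω', R₂ ω' ∂P
  set a : Ω → ℝ := fun ω => C₁ ω - μC₁ with ha
  set b : Ω → ℝ := fun ω => C₂ ω - μC₂ with hb
  set c : Ω → ℝ := fun ω => R₁ ω - μR₁ with hc
  set d : Ω → ℝ := fun ω => R₂ ω - μR₂ with hd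
  have hνuniv : ν Set.univ = 1 := by
    simp [hν, hSdef, Real.volume_Ioo]
  have key : ∀ ω : Ω,
      (∫ t in S, (a ω + c ω / 2 * q₁ t) * (b ω + d ω / 2 * q₂ t))
        = a ω * b ω + I2 / 2 * (a ω * d ω) + I1 / 2 * (b ω * c ω)
          + I12 / 4 * (c ω * d ω) := by
    intro ω
    have hfun : (fun t => (a ω + c ω / 2 * q₁ t) * (b ω + d ω / 2 * q₂ t))
        = (fun t => (a ω * b ω + (a ω * d ω / 2) * q₂ t)
            + ((b ω * c ω / 2) * q₁ t + (c ω * d ω / 4) * (q₁ * q₂) t)) := by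
      funext t; simp [Pi.mul_apply]; ring
    have h1 : Integrable (fun t => a ω * b ω + (a ω * d ω / 2) * q₂ t) ν :=
      (integrable_const _).add (hq₂i.const_mul _)
    have h2 : Integrable (fun t => (b ω * c ω / 2) * q₁ t
        + (c ω * d ω / 4) * (q₁ * q₂) t) ν :=
      (hq₁i.const_mul _).add (hq12.const_mul _)
    rw [show (∫ t in S, (a ω + c ω / 2 * q₁ t) * (b ω + d ω / 2 * q₂ t))
        = ∫ t, (fun t => (a ω + c ω / 2 * q₁ t) * (b ω + d ω / 2 * q₂ t)) t ∂ν from rfl,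
      hfun, integral_add h1 h2,
      integral_add (integrable_const _) (hq₂i.const_mul _),
      integral_add (hq₁i.const_mul _) (hq12.const_mul _),
      integral_const, integral_const_mul, integral_const_mul, integral_const_mul,
      measureReal_def, hνuniv]
    simp only [ENNReal.toReal_one, one_smul]
    have : (∫ t, (q₁ * q₂) t ∂ν) = I12 := rfl
    rw [this]
    ring
  have hconst : ∀ r : ℝ, MemLp (fun _ : Ω => r) 2 P := fun r => memLp_const r
  have hA : MemLp a 2 P := hC₁.sub (hconst μC₁)
  have hB : MemLp b 2 P := hC₂.sub (hconst μC₂)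
  have hCc : MemLp c 2 P := hR₁.sub (hconst μR₁)
  have hD : MemLp d 2 P := hR₂.sub (hconst μR₂)
  have hab : Integrable (fun ω => a ω * b ω) P := l2_mul_integrable hA hB
  have had : Integrable (fun ω => a ω * d ω) P := l2_mul_integrable hA hD
  have hbc : Integrable (fun ω => b ω * c ω) P := l2_mul_integrable hB hCc
  have hcd : Integrable (fun ω => c ω * d ω) P := l2_mul_integrable hCc hD
  have lhs_eq : (∫ ω, (∫ t in S,
        (a ω + c ω / 2 * q₁ t) * (b ω + d ω / 2 * q₂ t)) ∂P)
      = ∫ ω, (a ω * b ω + I2 / 2 * (a ω * d ω) + I1 / 2 * (b ω * c ω)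
          + I12 / 4 * (c ω * d ω)) ∂P := by
    exact integral_congr_ae (Filter.Eventually.of_forall fun ω => key ω)
  have hcov1 : cov P C₁ C₂ = ∫ ω, a ω * b ω ∂P := rfl
  have hcov2 : cov P R₁ R₂ = ∫ ω, c ω * d ω ∂P := rfl
  have hcov3 : cov P C₁ R₂ = ∫ ω, a ω * d ω ∂P := rfl
  have hcov4 : cov P C₂ R₁ = ∫ ω, b ω * c ω ∂P := rfl
  calc (∫ ω, (∫ t in S,
        (a ω + c ω / 2 * q₁ t) * (b ω + d ω / 2 * q₂ t)) ∂P)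
      = ∫ ω, (a ω * b ω + I2 / 2 * (a ω * d ω) + I1 / 2 * (b ω * c ω)
          + I12 / 4 * (c ω * d ω)) ∂P := lhs_eq
    _ = (∫ ω, a ω * b ω ∂P) + I2 / 2 * (∫ ω, a ω * d ω ∂P)
          + I1 / 2 * (∫ ω, b ω * c ω ∂P) + I12 / 4 * (∫ ω, c ω * d ω ∂P) := by
        have h2 : Integrable (fun ω => I2 / 2 * (a ω * d ω)) P := had.const_mul _
        have h3 : Integrable (fun ω => I1 / 2 * (b ω * c ω)) P := hbc.const_mul _
        have h4 : Integrable (fun ω => I12 / 4 * (c ω * d ω)) P := hcd.const_mul _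
        have h12 : Integrable (fun ω => a ω * b ω + I2 / 2 * (a ω * d ω)) P := hab.add h2
        have h123 : Integrable (fun ω => a ω * b ω + I2 / 2 * (a ω * d ω)
            + I1 / 2 * (b ω * c ω)) P := h12.add h3
        rw [integral_add h123 h4, integral_add h12 h3, integral_add hab h2,
          integral_const_mul, integral_const_mul, integral_const_mul]
    _ = cov P C₁ C₂ + I12 / 4 * cov P R₁ R₂ + I2 / 2 * cov P C₁ R₂
          + I1 / 2 * cov P C₂ R₁ := by
        rw [hcov1, hcov2, hcov3, hcov4]; ring
end

section
/- Let (Ω, 𝔽, P) be a probability space, p ∈ ℕ, let C, R : Ω → (Fin p → ℝ) be random vectors with square-integrable components, and for each i let q_i : ℝ → ℝ be measurable and square-integrable on (0,1). Define the p×p matrices: Σ_CC with entries Cov(C_i, C_j), Σ_RR with entries Cov(R_i, R_j), Σ_CR with entries Cov(C_i, R_j), Σ_RC = Σ_CRᵀ, Ψ = diagonal(i ↦ ∫₀¹ q_i(t) dt), and 𝔈 with entries 𝔈_{ij} = ∫₀¹ q_i(t)q_j(t) dt. Let Σ_B be the p×p matrix with entries [Σ_B]_{ij} = E[ ∫₀¹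 ( (C_i − E C_i) + ((R_i − E R_i)/2)q_i(t) )·( (C_j − E C_j) + ((R_j − E R_j)/2)q_j(t) ) dt ]. Then Σ_B = Σ_CC + (1/4)·(𝔈 ⊙ Σ_RR) + (1/2)·Σ_CR·Ψ + (1/2)·Ψ·Σ_RC, where ⊙ denotes the Schur (Hadamard, entrywise) product of matrices. -/
open MeasureTheory Matrix

set_option maxHeartbeats 1000000

/-- Product of two L² functions is integrable. -/
lemma memL2_mul_integrable {α : Type*} [MeasurableSpace α] {μ : Measure α}
    {f g : α → ℝ} (hf : MemLp f 2 μ) (hg : MemLp g 2 μ) :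
    Integrable (fun x => f x * g x) μ := by
  have h := L2.integrable_inner (𝕜 := ℝ) (hf.toLp f) (hg.toLp g)
  refine h.congr ?_
  filter_upwards [hf.coeFn_toLp, hg.coeFn_toLp] with x hx hy
  simp [hx, hy, RCLike.inner_apply, mul_comm]

/-- The barycentre-based covariance matrix of an interval-valued random vector:
`Σ_B = Σ_CC + (1/4)(𝔈 ⊙ Σ_RR) + (1/2)Σ_CR Ψ + (1/2)Ψ Σ_RC`,
where `⊙` is the Schur (Hadamard) product. -/
theorem covB_matrix_eq (Ω : Type*) [MeasurableSpace Ω]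
    (P : Measure Ω) [IsProbabilityMeasure P] (p : ℕ)
    (C R : Ω → Fin p → ℝ)
    (hC : ∀ i, MemLp (fun ω => C ω i) 2 P)
    (hR : ∀ i, MemLp (fun ω => R ω i) 2 P)
    (q : Fin p → ℝ → ℝ)
    (hmeas : ∀ i, Measurable (q i))
    (hq : ∀ i, MemLp (q i) 2 (volume.restrict (Set.Ioo (0:ℝ) 1)))
    (SCC SRR SCR SRC Ψ 𝔈 SB : Matrix (Fin p) (Fin p) ℝ)
    (hCC : ∀ i j, SCC i j = cov P (fun ω => C ω i) (fun ω => C ω j))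
    (hRR : ∀ i j, SRR i j = cov P (fun ω => R ω i) (fun ω => R ω j))
    (hCR : ∀ i j, SCR i j = cov P (fun ω => C ω i) (fun ω => R ω j))
    (hRC : SRC = SCRᵀ)
    (hΨ : Ψ = Matrix.diagonal fun i => ∫ t in Set.Ioo (0:ℝ) 1, q i t)
    (h𝔈 : ∀ i j, 𝔈 i j = ∫ t in Set.Ioo (0:ℝ) 1, q i t * q j t)
    (hB : ∀ i j, SB i j = ∫ ω, (∫ t in Set.Ioo (0:ℝ) 1,
        ((C ω i - ∫ ω', C ω' i ∂P) + (R ω i - ∫ ω', R ω' i ∂P) / 2 * q i t)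
          * ((C ω j - ∫ ω', C ω' j ∂P) + (R ω j - ∫ ω', R ω' j ∂P) / 2 * q j t)) ∂P) :
    SB = SCC + (1 / 4 : ℝ) • (Matrix.hadamard 𝔈 SRR)
      + (1 / 2 : ℝ) • (SCR * Ψ) + (1 / 2 : ℝ) • (Ψ * SRC) := by
  ext i j
  set μ := volume.restrict (Set.Ioo (0:ℝ) 1) with hμdef
  -- q-integrability
  have hqint : ∀ k, Integrable (q k) μ := fun k => (hq k).integrable one_le_two
  have hqqint : ∀ k l, Integrable (fun t => q k t * q l t) μ :=
    fun k l => memL2_mul_integrable (hq k) (hq l)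
  -- notation for centred variables
  set cC : Fin p → Ω → ℝ := fun k ω => C ω k - ∫ ω', C ω' k ∂P with hcC
  set cR : Fin p → Ω → ℝ := fun k ω => R ω k - ∫ ω', R ω' k ∂P with hcR
  have hcCL2 : ∀ k, MemLp (cC k) 2 P := fun k => (hC k).sub (memLp_const _)
  have hcRL2 : ∀ k, MemLp (cR k) 2 P := fun k => (hR k).sub (memLp_const _)
  set Ii : ℝ := ∫ t in Set.Ioo (0:ℝ) 1, q i t with hIi
  set Ij : ℝ := ∫ t in Set.Ioo (0:ℝ) 1, q j t with hIj
  set Iij : ℝ := ∫ t in Set.Ioo (0:ℝ) 1, q i t * q j t with hIij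
  -- compute the inner integral pointwise
  have hμuniv : (μ Set.univ).toReal = 1 := by
    simp [hμdef, Real.volume_Ioo]
  have hinner : ∀ ω, (∫ t in Set.Ioo (0:ℝ) 1,
      ((C ω i - ∫ ω', C ω' i ∂P) + (R ω i - ∫ ω', R ω' i ∂P) / 2 * q i t)
        * ((C ω j - ∫ ω', C ω' j ∂P) + (R ω j - ∫ ω', R ω' j ∂P) / 2 * q j t))
      = cC i ω * cC j ω + ((cC i ω * cR j ω) * (Ij / 2)
          + ((cC j ω * cR i ω) * (Ii / 2) + (cR i ω * cR j ω) * (Iij / 4))) := by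
    intro ω
    have hfun : (fun t => ((C ω i - ∫ ω', C ω' i ∂P) + (R ω i - ∫ ω', R ω' i ∂P) / 2 * q i t)
        * ((C ω j - ∫ ω', C ω' j ∂P) + (R ω j - ∫ ω', R ω' j ∂P) / 2 * q j t))
        = fun t => cC i ω * cC j ω + ((cC i ω * cR j ω / 2) * q j t
            + ((cC j ω * cR i ω / 2) * q i t
              + (cR i ω * cR j ω / 4) * (q i t * q j t))) := by
      funext t; simp only [hcC, hcR]; ring
    have h1 : Integrable (fun t => (cC i ω * cR j ω / 2) * q j t) μ := (hqint j).const_mul _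
    have h2 : Integrable (fun t => (cC j ω * cR i ω / 2) * q i t) μ := (hqint i).const_mul _
    have h3 : Integrable (fun t => (cR i ω * cR j ω / 4) * (q i t * q j t)) μ :=
      (hqqint i j).const_mul _
    have h23 : Integrable (fun t => cC j ω * cR i ω / 2 * q i t
        + cR i ω * cR j ω / 4 * (q i t * q j t)) μ := h2.add h3
    have h123 : Integrable (fun t => cC i ω * cR j ω / 2 * q j t
        + (cC j ω * cR i ω / 2 * q i t + cR i ω * cR j ω / 4 * (q i t * q j t))) μ := h1.add h23
    rw [hfun, integral_add (integrable_const _) h123,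
      integral_add h1 h23, integral_add h2 h3,
      integral_const, integral_const_mul, integral_const_mul, integral_const_mul, measureReal_def, hμuniv]
    simp only [smul_eq_mul, one_mul, ← hIi, ← hIj, ← hIij]
    ring
  -- integrabilities over Ω
  have hCC' : Integrable (fun ω => cC i ω * cC j ω) P :=
    memL2_mul_integrable (hcCL2 i) (hcCL2 j)
  have hCRj : Integrable (fun ω => (cC i ω * cR j ω) * (Ij / 2)) P :=
    (memL2_mul_integrable (hcCL2 i) (hcRL2 j)).mul_const _
  have hCRi : Integrable (fun ω => (cC j ω * cR i ω) * (Ii / 2)) P :=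
    (memL2_mul_integrable (hcCL2 j) (hcRL2 i)).mul_const _
  have hRR' : Integrable (fun ω => (cR i ω * cR j ω) * (Iij / 4)) P :=
    (memL2_mul_integrable (hcRL2 i) (hcRL2 j)).mul_const _
  -- compute SB i j
  have hSB : SB i j = cov P (fun ω => C ω i) (fun ω => C ω j)
      + cov P (fun ω => C ω i) (fun ω => R ω j) * (Ij / 2)
      + cov P (fun ω => C ω j) (fun ω => R ω i) * (Ii / 2)
      + cov P (fun ω => R ω i) (fun ω => R ω j) * (Iij / 4) := by
    rw [hB i j]
    calc ∫ ω, (∫ t in Set.Ioo (0:ℝ) 1,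
        ((C ω i - ∫ ω', C ω' i ∂P) + (R ω i - ∫ ω', R ω' i ∂P) / 2 * q i t)
          * ((C ω j - ∫ ω', C ω' j ∂P) + (R ω j - ∫ ω', R ω' j ∂P) / 2 * q j t)) ∂P
        = ∫ ω, (cC i ω * cC j ω + ((cC i ω * cR j ω) * (Ij / 2)
            + ((cC j ω * cR i ω) * (Ii / 2) + (cR i ω * cR j ω) * (Iij / 4)))) ∂P := by
          exact integral_congr_ae (Filter.Eventually.of_forall hinner)
      _ = (∫ ω, cC i ω * cC j ω ∂P) + ((∫ ω, (cC i ω * cR j ω) * (Ij / 2) ∂P)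
            + ((∫ ω, (cC j ω * cR i ω) * (Ii / 2) ∂P)
              + (∫ ω, (cR i ω * cR j ω) * (Iij / 4) ∂P))) := by
          have g23 : Integrable (fun ω => cC j ω * cR i ω * (Ii / 2)
              + cR i ω * cR j ω * (Iij / 4)) P := hCRi.add hRR'
          have g123 : Integrable (fun ω => cC i ω * cR j ω * (Ij / 2)
              + (cC j ω * cR i ω * (Ii / 2) + cR i ω * cR j ω * (Iij / 4))) P := hCRj.add g23
          rw [integral_add hCC' g123, integral_add hCRj g23, integral_add hCRi hRR']
      _ = _ := by
          rw [integral_mul_const, integral_mul_const, integral_mul_const]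
          simp only [cov, hcC, hcR]
          ring
  -- compute the RHS entry
  rw [hSB]
  simp only [Matrix.add_apply, Matrix.smul_apply, Matrix.hadamard_apply, hΨ, hRC,
    Matrix.mul_diagonal, Matrix.diagonal_mul, Matrix.transpose_apply, smul_eq_mul,
    hCC i j, hRR i j, hCR i j, hCR j i, h𝔈 i j, ← hIi, ← hIj, ← hIij]
  ring
end
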